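/- Let P be a bounded idempotent and F₀ a unitary on a Hilbert space with [P, F₀] and [P*, F₀] compact. Set R = P(1 − (P*−P)²)^{-1/2} and Q = RR*. Then T = R F₀ R* + (1 − Q) is a Fredholm operator, since T*T − 1 is compact. -/

import Mathlib

set_option synthInstance.maxHeartbeats 800000
set_option maxHeartbeats 4000000

open ContinuousLinearMap
open scoped NNReal

/-- A bounded operator is Fredholm if it has finite-dimensional kernel, closed range,
and finite-dimensional cokernel. -/
def IsFredholmOp {H : Type*} [NormedAddCommGroup H] [InnerProductSpace ℂ H]
    [CompleteSpace H] (T : H →L[ℂ] H) : Prop :=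
  FiniteDimensional ℂ (LinearMap.ker (T : H →ₗ[ℂ] H)) ∧
  IsClosed (LinearMap.range (T : H →ₗ[ℂ] H) : Set H) ∧
  FiniteDimensional ℂ (H ⧸ LinearMap.range (T : H →ₗ[ℂ] H))

section Aux

variable {H : Type*} [NormedAddCommGroup H] [InnerProductSpace ℂ H] [CompleteSpace H]

/- ### compact operator combinators -/

lemma aux_cc_left (a : H →L[ℂ] H) {K : H →L[ℂ] H} (hK : IsCompactOperator ⇑K) :
    IsCompactOperator ⇑(a * K) := by
  have h : ⇑(a * K) = ⇑a ∘ ⇑K := rfl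
  rw [h]; exact hK.clm_comp a

lemma aux_cc_right {K : H →L[ℂ] H} (hK : IsCompactOperator ⇑K) (b : H →L[ℂ] H) :
    IsCompactOperator ⇑(K * b) := by
  have h : ⇑(K * b) = ⇑K ∘ ⇑b := rfl
  rw [h]; exact hK.comp_clm b

lemma aux_cc_sandwich (a b : H →L[ℂ] H) {K : H →L[ℂ] H} (hK : IsCompactOperator ⇑K) :
    IsCompactOperator ⇑(a * K * b) :=
  aux_cc_right (aux_cc_left a hK) b

lemma aux_cc_mul (F a b : H →L[ℂ] H) (ha : IsCompactOperator ⇑(a * F - F * a))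
    (hb : IsCompactOperator ⇑(b * F - F * b)) :
    IsCompactOperator ⇑(a * b * F - F * (a * b)) := by
  have h : a * b * F - F * (a * b) = a * (b * F - F * b) + (a * F - F * a) * b := by
    noncomm_ring
  rw [h, ContinuousLinearMap.coe_add']
  exact (aux_cc_left a hb).add (aux_cc_right ha b)

/- ### membership of continuous functional calculus in closed subalgebras -/

lemma cfc_mem_closed_subalgebra (a : H →L[ℂ] H) (ha : IsSelfAdjoint a)
    (S : Subalgebra ℝ (H →L[ℂ] H)) (hS : IsClosed (S : Set (H →L[ℂ] H))) (haS : a ∈ S)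
    (f : ℝ → ℝ) (hf : ContinuousOn f (spectrum ℝ a)) : cfc f a ∈ S := by
  have key : ∀ g : C(spectrum ℝ a, ℝ), cfcHom (R := ℝ) ha g ∈ S := by
    intro g
    let ψ : C(spectrum ℝ a, ℝ) →ₐ[ℝ] (H →L[ℂ] H) := (cfcHom (R := ℝ) ha).toAlgHom
    let T : Subalgebra ℝ C(spectrum ℝ a, ℝ) := S.comap ψ
    have hT : IsClosed (T : Set C(spectrum ℝ a, ℝ)) := hS.preimage (cfcHom_continuous ha)
    have hpoly : polynomialFunctions (spectrum ℝ a) ≤ T := by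
      rintro g' hg'
      obtain ⟨p, -, rfl⟩ := hg'
      show ψ (Polynomial.toContinuousMapOnAlgHom _ p) ∈ S
      have h1 : ψ (Polynomial.toContinuousMapOnAlgHom _ p) = Polynomial.aeval a p := by
        rw [← cfc_polynomial p a ha, cfc_apply p.eval a ha (p.continuous.continuousOn)]
        congr 1
      rw [h1, ← Polynomial.aeval_subalgebra_coe p S ⟨a, haS⟩]
      exact SetLike.coe_mem _
    have htop : (⊤ : Subalgebra ℝ C(spectrum ℝ a, ℝ)) ≤ T := by
      rw [← polynomialFunctions.topologicalClosure (spectrum ℝ a)]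
      exact Subalgebra.topologicalClosure_minimal hpoly hT
    exact htop (by trivial)
  rw [cfc_apply f a ha hf]
  exact key _

/- ### finite dimensionality from compactness -/

omit [CompleteSpace H] in
lemma aux_findim {K : H →L[ℂ] H} (hK : IsCompactOperator ⇑K) (V : Submodule ℂ H)
    (hVc : IsClosed (V : Set H)) (hfix : ∀ x ∈ V, K x = -x) : FiniteDimensional ℂ V := by
  obtain ⟨C, hC, hCsub⟩ := hK.image_closedBall_subset_compact 1
  set B : Set H := (V : Set H) ∩ Metric.closedBall 0 1 with hB
  have hBsub : B ⊆ -C := by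
    rintro x ⟨hxV, hx1⟩
    have : K x ∈ C := hCsub ⟨x, hx1, rfl⟩
    rw [Set.mem_neg]
    rwa [hfix x hxV] at this
  have hBcompact : IsCompact B :=
    hC.neg.of_isClosed_subset (hVc.inter Metric.isClosed_closedBall) hBsub
  have hball : IsCompact (Metric.closedBall (0 : V) 1) := by
    rw [Topology.IsEmbedding.subtypeVal.isCompact_iff]
    convert hBcompact using 1
    ext x
    simp only [Set.mem_image, Metric.mem_closedBall, dist_zero_right]
    constructor
    · rintro ⟨y, hy, rfl⟩
      exact ⟨y.2, by simpa using hy⟩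
    · rintro ⟨hxV, hx⟩
      exact ⟨⟨x, hxV⟩, by simpa using hx, rfl⟩
  exact FiniteDimensional.of_isCompact_closedBall₀ (𝕜 := ℂ) (by norm_num) hball

/- ### Atkinson-type criterion -/

lemma aux_fredholm (T : H →L[ℂ] H)
    (h1 : IsCompactOperator ⇑(adjoint T * T - 1))
    (h2 : IsCompactOperator ⇑(T * adjoint T - 1)) : IsFredholmOp T := by
  have hker : FiniteDimensional ℂ (LinearMap.ker (T : H →ₗ[ℂ] H)) := by
    refine aux_findim h1 _ (isClosed_ker T) (fun x hx => ?_)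
    have hx0 : T x = 0 := hx
    simp [ContinuousLinearMap.sub_apply, ContinuousLinearMap.mul_apply, hx0]
  set V := (LinearMap.ker (T : H →ₗ[ℂ] H))ᗮ with hV
  have hVclosed : IsClosed (V : Set H) := Submodule.isClosed_orthogonal _
  haveI : CompleteSpace V := hVclosed.completeSpace_coe
  haveI : CompleteSpace (LinearMap.ker (T : H →ₗ[ℂ] H)) := (isClosed_ker T).completeSpace_coe
  set T' : V →L[ℂ] H := T.comp (Submodule.subtypeL V) with hT'
  have key : ∃ c : ℝ≥0, ∀ v : V, ‖(v : H)‖ ≤ c * ‖T' v‖ := by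
    by_contra hcon
    push_neg at hcon
    have hex : ∀ n : ℕ, ∃ v : V, ((n : ℝ≥0) + 1) * ‖T' v‖ < ‖(v : H)‖ := by
      intro n
      obtain ⟨v, hv⟩ := hcon ((n : ℝ≥0) + 1)
      exact ⟨v, by exact_mod_cast hv⟩
    choose v hv using hex
    have hvne : ∀ n, (v n : H) ≠ 0 := by
      intro n hzero
      have := hv n
      rw [hzero, norm_zero] at this
      push_cast at this
      have h0 : (0:ℝ) ≤ ((n:ℝ) + 1) * ‖T' (v n)‖ := by positivity
      linarith
    set u : ℕ → H := fun n => ‖(v n : H)‖⁻¹ • (v n : H) with hu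
    have hu_norm : ∀ n, ‖u n‖ = 1 := fun n => norm_smul_inv_norm (hvne n)
    have huV : ∀ n, u n ∈ V := fun n => V.smul_mem _ (v n).2
    have hTu_bound : ∀ n, ‖T (u n)‖ ≤ 1 / ((n : ℝ) + 1) := by
      intro n
      have hpos : (0:ℝ) < ‖(v n : H)‖ := norm_pos_iff.mpr (hvne n)
      have hTv : ‖T' (v n)‖ ≤ ‖(v n : H)‖ / ((n:ℝ) + 1) := by
        have := hv n
        push_cast at this
        rw [le_div_iff₀ (by positivity)]
        nlinarith
      have hTeq : T (u n) = ‖(v n : H)‖⁻¹ • T' (v n) := by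
        simp [hu, map_smul, hT']
      rw [hTeq, norm_smul, norm_inv, norm_norm]
      rw [inv_mul_le_iff₀ hpos]
      calc ‖T' (v n)‖ ≤ ‖(v n : H)‖ / ((n:ℝ) + 1) := hTv
        _ = ‖(v n : H)‖ * (1 / ((n:ℝ)+1)) := by ring
    have hTu : Filter.Tendsto (fun n => T (u n)) Filter.atTop (nhds 0) := by
      refine squeeze_zero_norm hTu_bound ?_
      exact tendsto_one_div_add_atTop_nhds_zero_nat
    set K₁ : H →L[ℂ] H := adjoint T * T - 1 with hK₁
    obtain ⟨C, hC, hCsub⟩ := h1.image_closedBall_subset_compact 1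
    have hmem : ∀ n, K₁ (u n) ∈ C := by
      intro n
      exact hCsub ⟨u n, by simp [Metric.mem_closedBall, hu_norm n], rfl⟩
    obtain ⟨y, -, φ, hφ, hy⟩ := hC.tendsto_subseq hmem
    have hTTu : Filter.Tendsto (fun n => adjoint T (T (u (φ n)))) Filter.atTop (nhds 0) := by
      have := ((adjoint T).continuous.tendsto 0).comp (hTu.comp hφ.tendsto_atTop)
      rw [map_zero] at this
      exact this
    have hxlim : Filter.Tendsto (fun n => u (φ n)) Filter.atTop (nhds (-y)) := by
      have heq : ∀ n, u (φ n) = adjoint T (T (u (φ n))) - K₁ (u (φ n)) := by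
        intro n
        simp [hK₁, ContinuousLinearMap.sub_apply, ContinuousLinearMap.mul_apply]
      have := hTTu.sub hy
      rw [zero_sub] at this
      exact this.congr (fun n => (heq n).symm)
    have h1norm : ‖(-y : H)‖ = 1 := by
      have hn : Filter.Tendsto (fun n => ‖u (φ n)‖) Filter.atTop (nhds ‖(-y : H)‖) :=
        (continuous_norm.tendsto _).comp hxlim
      have hc : Filter.Tendsto (fun _ : ℕ => (1:ℝ)) Filter.atTop (nhds 1) := tendsto_const_nhds
      have := tendsto_nhds_unique (hn.congr (fun n => by rw [hu_norm])) hc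
      linarith [this]
    have hyV : -y ∈ V := hVclosed.mem_of_tendsto hxlim (Filter.Eventually.of_forall fun n => huV _)
    have hyker : -y ∈ LinearMap.ker (T : H →ₗ[ℂ] H) := by
      have hl1 : Filter.Tendsto (fun n => T (u (φ n))) Filter.atTop (nhds (T (-y))) :=
        (T.continuous.tendsto _).comp hxlim
      have hl2 : Filter.Tendsto (fun n => T (u (φ n))) Filter.atTop (nhds 0) :=
        hTu.comp hφ.tendsto_atTop
      exact LinearMap.mem_ker.mpr (tendsto_nhds_unique hl1 hl2)
    have hy0 : -y = 0 := by
      have hd : Disjoint (LinearMap.ker (T : H →ₗ[ℂ] H)) V := (Submodule.orthogonal_disjoint _)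
      have := hd.le_bot (Submodule.mem_inf.mpr ⟨hyker, hyV⟩)
      simpa using this
    rw [hy0, norm_zero] at h1norm
    norm_num at h1norm
  obtain ⟨c, hc⟩ := key
  have hcpos : ∀ v : V, ‖v‖ ≤ c * ‖T' v‖ := by
    intro v
    have := hc v
    simpa using this
  have hanti : AntilipschitzWith c T' := ContinuousLinearMap.antilipschitz_of_bound T' hcpos
  have hclosed_range' : IsClosed (Set.range ⇑T') := hanti.isClosed_range T'.uniformContinuous
  have hrange_eq : (LinearMap.range (T : H →ₗ[ℂ] H) : Set H) = Set.range ⇑T' := by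
    ext x
    constructor
    · rintro ⟨w, rfl⟩
      have hcompl : IsCompl (LinearMap.ker (T : H →ₗ[ℂ] H)) V := Submodule.isCompl_orthogonal_of_hasOrthogonalProjection
      have hw : w ∈ (LinearMap.ker (T : H →ₗ[ℂ] H)) ⊔ V := by rw [hcompl.sup_eq_top]; trivial
      obtain ⟨a, ha, b, hb, rfl⟩ := Submodule.mem_sup.mp hw
      refine ⟨⟨b, hb⟩, ?_⟩
      have ha0 : T a = 0 := ha
      simp [hT', map_add, ha0]
    · rintro ⟨w, rfl⟩
      exact ⟨(w : H), rfl⟩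
  have hclosed : IsClosed (LinearMap.range (T : H →ₗ[ℂ] H) : Set H) := by rw [hrange_eq]; exact hclosed_range'
  set W := LinearMap.range (T : H →ₗ[ℂ] H) with hW
  haveI : CompleteSpace W := hclosed.completeSpace_coe
  have hWc : IsCompl W Wᗮ := Submodule.isCompl_orthogonal_of_hasOrthogonalProjection
  have hperp : FiniteDimensional ℂ Wᗮ := by
    refine aux_findim h2 _ (Submodule.isClosed_orthogonal _) (fun x hx => ?_)
    have hx' : adjoint T x = 0 := by
      have h0 : ∀ y : H, inner ℂ (adjoint T x) y = (0:ℂ) := by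
        intro y
        rw [ContinuousLinearMap.adjoint_inner_left]
        exact (Submodule.mem_orthogonal' W x).mp hx (T y) ⟨y, rfl⟩
      have := h0 (adjoint T x)
      rwa [inner_self_eq_zero] at this
    simp [ContinuousLinearMap.sub_apply, ContinuousLinearMap.mul_apply, hx']
  have hquot : FiniteDimensional ℂ (H ⧸ W) := by
    have e := Submodule.quotientEquivOfIsCompl W Wᗮ hWc
    exact Module.Finite.equiv e.symm
  exact ⟨hker, hclosed, hquot⟩

end Aux

/-- Let `P` be a bounded idempotent and `F₀` a unitary with `[P, F₀]` and
`[P*, F₀]` compact.  Set `R = P (1 − (P*−P)²)^{-1/2}` and `Q = R R*`.  Then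
`T = R F₀ R* + (1 − Q)` is Fredholm, since `T*T − 1` is compact. -/
theorem T_is_Fredholm {H : Type*} [NormedAddCommGroup H]
    [InnerProductSpace ℂ H] [CompleteSpace H]
    (P F₀ : H →L[ℂ] H) (hP : P * P = P)
    (hF₀ : adjoint F₀ * F₀ = 1 ∧ F₀ * adjoint F₀ = 1)
    (hPF : IsCompactOperator ⇑(P * F₀ - F₀ * P))
    (hPsF : IsCompactOperator ⇑(adjoint P * F₀ - F₀ * adjoint P)) :
    letI R := P * Ring.inverse (CFC.sqrt (1 - (adjoint P - P) ^ 2))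
    letI T := R * F₀ * adjoint R + (1 - R * adjoint R)
    IsCompactOperator ⇑(adjoint T * T - 1) ∧ IsFredholmOp T := by
  obtain ⟨hF₁, hF₂⟩ := hF₀
  -- atoms
  set sP : H →L[ℂ] H := star P with hsPdef
  set sF : H →L[ℂ] H := star F₀ with hsFdef
  have hadjP : adjoint P = sP := by rw [hsPdef]; exact (star_eq_adjoint P).symm
  have hadjF : adjoint F₀ = sF := by rw [hsFdef]; exact (star_eq_adjoint F₀).symm
  rw [hadjF] at hF₁ hF₂
  rw [hadjP] at hPsF ⊢
  have hsP : sP * sP = sP := by rw [hsPdef, ← star_mul, hP]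
  set N : H →L[ℂ] H := 1 - (sP - P) ^ 2 with hNdef
  -- selfadjointness and positivity of N
  have hDstar : star (sP - P) = -(sP - P) := by
    rw [star_sub, hsPdef, star_star]
    abel
  have hNsa : IsSelfAdjoint N := by
    show star N = N
    rw [hNdef, star_sub, star_one, star_pow, hDstar, neg_sq]
  have hNplus : N = 1 + star (sP - P) * (sP - P) := by
    rw [hNdef, hDstar, neg_mul, ← sq, sub_eq_add_neg]
  have hone_le : (1 : H →L[ℂ] H) ≤ N := by
    rw [hNplus]
    exact le_add_of_nonneg_right (star_mul_self_nonneg _)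
  have hNnn : (0 : H →L[ℂ] H) ≤ N := le_trans zero_le_one hone_le
  have hNunit : IsUnit N := CStarAlgebra.isUnit_of_le 1 hone_le
  -- commutation of N with P and sP
  have hsq_expand : (sP - P) ^ 2 = sP - sP * P - P * sP + P := by
    have h : (sP - P) ^ 2 = sP * sP - sP * P - P * sP + P * P := by noncomm_ring
    rw [h, hP, hsP]
  have hPN1 : P * N = P * (sP * P) := by
    rw [hNdef, hsq_expand]
    simp only [mul_sub, sub_mul, mul_add, add_mul, mul_one, one_mul, mul_assoc, hP]
    have e1 : P * (P * sP) = P * sP := by rw [← mul_assoc, hP]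
    rw [e1]
    abel
  have hNP1 : N * P = P * (sP * P) := by
    rw [hNdef, hsq_expand]
    simp only [mul_sub, sub_mul, mul_add, add_mul, mul_one, one_mul, mul_assoc, hP]
    abel
  have hsPN1 : sP * N = sP * (P * sP) := by
    rw [hNdef, hsq_expand]
    simp only [mul_sub, sub_mul, mul_add, add_mul, mul_one, one_mul, mul_assoc, hsP]
    have e1 : sP * (sP * P) = sP * P := by rw [← mul_assoc, hsP]
    rw [e1]
    abel
  have hNsP1 : N * sP = sP * (P * sP) := by
    rw [hNdef, hsq_expand]
    simp only [mul_sub, sub_mul, mul_add, add_mul, mul_one, one_mul, mul_assoc, hsP]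
    abel
  have hPNc : Commute P N := by
    show P * N = N * P
    rw [hPN1, hNP1]
  have hsPNc : Commute sP N := by
    show sP * N = N * sP
    rw [hsPN1, hNsP1]
  -- the closed subalgebra S
  let S : Subalgebra ℝ (H →L[ℂ] H) :=
    { carrier := {B | Commute P B ∧ Commute sP B ∧ IsCompactOperator ⇑(B * F₀ - F₀ * B)}
      mul_mem' := by
        rintro a b ⟨ha1, ha2, ha3⟩ ⟨hb1, hb2, hb3⟩
        exact ⟨ha1.mul_right hb1, ha2.mul_right hb2, aux_cc_mul F₀ a b ha3 hb3⟩
      one_mem' := by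
        refine ⟨Commute.one_right P, Commute.one_right sP, ?_⟩
        have h : (1 : H →L[ℂ] H) * F₀ - F₀ * 1 = 0 := by noncomm_ring
        rw [h, ContinuousLinearMap.coe_zero']
        exact isCompactOperator_zero
      add_mem' := by
        rintro a b ⟨ha1, ha2, ha3⟩ ⟨hb1, hb2, hb3⟩
        refine ⟨ha1.add_right hb1, ha2.add_right hb2, ?_⟩
        have h : (a + b) * F₀ - F₀ * (a + b) = (a * F₀ - F₀ * a) + (b * F₀ - F₀ * b) := by
          noncomm_ring
        rw [h, ContinuousLinearMap.coe_add']
        exact ha3.add hb3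
      zero_mem' := by
        refine ⟨Commute.zero_right P, Commute.zero_right sP, ?_⟩
        have h : (0 : H →L[ℂ] H) * F₀ - F₀ * 0 = 0 := by noncomm_ring
        rw [h, ContinuousLinearMap.coe_zero']
        exact isCompactOperator_zero
      algebraMap_mem' := by
        intro r
        refine ⟨(Algebra.commutes r P).symm, (Algebra.commutes r sP).symm, ?_⟩
        have h : algebraMap ℝ (H →L[ℂ] H) r * F₀ - F₀ * algebraMap ℝ (H →L[ℂ] H) r = 0 := by
          rw [Algebra.commutes r F₀, sub_self]
        rw [h, ContinuousLinearMap.coe_zero']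
        exact isCompactOperator_zero }
  have hSclosed : IsClosed (S : Set (H →L[ℂ] H)) := by
    have h1 : IsClosed {B : H →L[ℂ] H | Commute P B} := by
      have : {B : H →L[ℂ] H | Commute P B} = {B | P * B = B * P} := rfl
      rw [this]
      exact isClosed_eq (continuous_const.mul continuous_id) (continuous_id.mul continuous_const)
    have h2 : IsClosed {B : H →L[ℂ] H | Commute sP B} := by
      have : {B : H →L[ℂ] H | Commute sP B} = {B | sP * B = B * sP} := rfl
      rw [this]
      exact isClosed_eq (continuous_const.mul continuous_id) (continuous_id.mul continuous_const)
    have h3 : IsClosed {B : H →L[ℂ] H | IsCompactOperator ⇑(B * F₀ - F₀ * B)} := by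
      have hcont : Continuous (fun B : H →L[ℂ] H => B * F₀ - F₀ * B) :=
        (continuous_id.mul continuous_const).sub (continuous_const.mul continuous_id)
      exact isClosed_setOf_isCompactOperator.preimage hcont
    exact (h1.inter (h2.inter h3))
  -- N belongs to S
  have ccD : IsCompactOperator ⇑((sP - P) * F₀ - F₀ * (sP - P)) := by
    have h : (sP - P) * F₀ - F₀ * (sP - P) = (sP * F₀ - F₀ * sP) - (P * F₀ - F₀ * P) := by
      noncomm_ring
    rw [h, ContinuousLinearMap.coe_sub']
    exact hPsF.sub hPF
  have ccD2 : IsCompactOperator ⇑((sP - P) ^ 2 * F₀ - F₀ * (sP - P) ^ 2) := by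
    have h : (sP - P) ^ 2 * F₀ - F₀ * (sP - P) ^ 2 = (sP - P) * (sP - P) * F₀ - F₀ * ((sP - P) * (sP - P)) := by
      rw [sq]
    rw [h]
    exact aux_cc_mul F₀ _ _ ccD ccD
  have ccN : IsCompactOperator ⇑(N * F₀ - F₀ * N) := by
    have h : N * F₀ - F₀ * N = -((sP - P) ^ 2 * F₀ - F₀ * (sP - P) ^ 2) := by
      rw [hNdef]; noncomm_ring
    rw [h, ContinuousLinearMap.coe_neg']
    exact ccD2.neg
  have hNS : N ∈ S := ⟨hPNc, hsPNc, ccN⟩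
  -- the square root s of N
  have hnn : (0 : H →L[ℂ] H) ≤ cfc Real.sqrt N := cfc_nonneg (fun x _ => Real.sqrt_nonneg x)
  have hss : cfc Real.sqrt N * cfc Real.sqrt N = N := by
    rw [← cfc_mul Real.sqrt Real.sqrt N]
    have h : cfc (fun x => Real.sqrt x * Real.sqrt x) N = cfc (id : ℝ → ℝ) N :=
      cfc_congr (fun x hx => Real.mul_self_sqrt (spectrum_nonneg_of_nonneg hNnn hx))
    rw [h, cfc_id ℝ N]
  have hsqrt_eq : CFC.sqrt N = cfc Real.sqrt N := CFC.sqrt_unique hss hnn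
  rw [hsqrt_eq]
  set s : H →L[ℂ] H := cfc Real.sqrt N with hsdef
  obtain ⟨hPs, hsPs, ccs⟩ : s ∈ S :=
    cfc_mem_closed_subalgebra N hNsa S hSclosed hNS Real.sqrt Real.continuous_sqrt.continuousOn
  have hssa : IsSelfAdjoint s := IsSelfAdjoint.of_nonneg hnn
  -- invertibility of s
  obtain ⟨uN, huN⟩ := hNunit
  have hcsN : Commute s N := by rw [← hss]; exact (Commute.refl s).mul_right (Commute.refl s)
  have hcsu : Commute s (↑uN⁻¹ : H →L[ℂ] H) := by
    have h : Commute s (↑uN : H →L[ℂ] H) := huN ▸ hcsN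
    exact h.units_inv_right
  have hinv1 : s * (s * ↑uN⁻¹) = 1 := by
    rw [← mul_assoc, hss, ← huN, Units.mul_inv]
  have hinv2 : (s * ↑uN⁻¹) * s = 1 := by
    rw [mul_assoc, ← hcsu.eq, ← mul_assoc, hss, ← huN, Units.mul_inv]
  have hsUnit : IsUnit s := ⟨⟨s, s * ↑uN⁻¹, hinv1, hinv2⟩, rfl⟩
  set M : H →L[ℂ] H := Ring.inverse s with hMdef
  have hsM : s * M = 1 := Ring.mul_inverse_cancel s hsUnit
  have hMs : M * s = 1 := Ring.inverse_mul_cancel s hsUnit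
  -- commutation with M
  have commM : ∀ a : H →L[ℂ] H, Commute a s → Commute a M := by
    intro a hc
    show a * M = M * a
    calc a * M = (M * s) * a * M := by rw [hMs, one_mul]
      _ = M * (s * a) * M := by rw [mul_assoc M s a]
      _ = M * (a * s) * M := by rw [← hc.eq]
      _ = M * a * (s * M) := by noncomm_ring
      _ = M * a := by rw [hsM, mul_one]
  have hPM : Commute P M := commM P hPs
  have hsPM : Commute sP M := commM sP hsPs
  -- compact commutator for M
  have ccM : IsCompactOperator ⇑(M * F₀ - F₀ * M) := by
    have e : M * (s * F₀ - F₀ * s) * M = F₀ * M - M * F₀ := by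
      calc M * (s * F₀ - F₀ * s) * M = (M * s) * (F₀ * M) - (M * F₀) * (s * M) := by noncomm_ring
        _ = F₀ * M - M * F₀ := by rw [hMs, hsM, one_mul, mul_one]
    have key : M * F₀ - F₀ * M = -(M * (s * F₀ - F₀ * s) * M) := by
      rw [e]; noncomm_ring
    rw [key, ContinuousLinearMap.coe_neg']
    exact (aux_cc_sandwich M M ccs).neg
  -- star facts
  have hstar_s : star s = s := hssa
  have hstarM : star M = M := by
    have h1 : star M * s = 1 := by
      have := congrArg star hsM
      rwa [star_mul, hstar_s, star_one] at this
    calc star M = star M * (s * M) := by rw [hsM, mul_one]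
      _ = (star M * s) * M := by rw [mul_assoc]
      _ = M := by rw [h1, one_mul]
  have hadjR : adjoint (P * M) = M * sP := by
    rw [← star_eq_adjoint, star_mul, hstarM, hsPdef]
  have hstarsP : star sP = P := by rw [hsPdef, star_star]
  -- rewrite the goal
  rw [hadjR]
  have hadjT : adjoint (P * M * F₀ * (M * sP) + (1 - P * M * (M * sP)))
      = P * M * sF * (M * sP) + (1 - P * M * (M * sP)) := by
    rw [← star_eq_adjoint]
    simp only [star_add, star_sub, star_one, star_mul, hstarM, hstarsP, star_star]
    rw [← hsPdef, ← hsFdef]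
    noncomm_ring
  rw [hadjT]
  -- mover and cancellation lemmas
  have mvMP : ∀ X : H →L[ℂ] H, M * (P * X) = P * (M * X) := fun X => by
    rw [← mul_assoc, ← hPM.eq, mul_assoc]
  have mvMP' : M * P = P * M := hPM.eq.symm
  have mvMsP : ∀ X : H →L[ℂ] H, M * (sP * X) = sP * (M * X) := fun X => by
    rw [← mul_assoc, ← hsPM.eq, mul_assoc]
  have mvMsP' : M * sP = sP * M := hsPM.eq.symm
  have mvsP : ∀ X : H →L[ℂ] H, s * (P * X) = P * (s * X) := fun X => by
    rw [← mul_assoc, ← hPs.eq, mul_assoc]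
  have mvsP' : s * P = P * s := hPs.eq.symm
  have mvssP : ∀ X : H →L[ℂ] H, s * (sP * X) = sP * (s * X) := fun X => by
    rw [← mul_assoc, ← hsPs.eq, mul_assoc]
  have mvssP' : s * sP = sP * s := hsPs.eq.symm
  have idP : ∀ X : H →L[ℂ] H, P * (P * X) = P * X := fun X => by rw [← mul_assoc, hP]
  have idsP : ∀ X : H →L[ℂ] H, sP * (sP * X) = sP * X := fun X => by rw [← mul_assoc, hsP]
  have key1' : P * (sP * P) = P * (s * s) := by
    have h := hPN1.symm
    rw [← hss] at h
    exact h
  have key1 : ∀ X : H →L[ℂ] H, P * (sP * (P * X)) = P * (s * (s * X)) := fun X => by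
    rw [show P * (sP * (P * X)) = (P * (sP * P)) * X by noncomm_ring, key1',
        show (P * (s * s)) * X = P * (s * (s * X)) by noncomm_ring]
  have key2' : sP * (P * sP) = sP * (s * s) := by
    have h := hsPN1.symm
    rw [← hss] at h
    exact h
  have key2 : ∀ X : H →L[ℂ] H, sP * (P * (sP * X)) = sP * (s * (s * X)) := fun X => by
    rw [show sP * (P * (sP * X)) = (sP * (P * sP)) * X by noncomm_ring, key2',
        show (sP * (s * s)) * X = sP * (s * (s * X)) by noncomm_ring]
  have csM : ∀ X : H →L[ℂ] H, s * (M * X) = X := fun X => by rw [← mul_assoc, hsM, one_mul]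
  have cMs : ∀ X : H →L[ℂ] H, M * (s * X) = X := fun X => by rw [← mul_assoc, hMs, one_mul]
  have uF1 : ∀ X : H →L[ℂ] H, sF * (F₀ * X) = X := fun X => by rw [← mul_assoc, hF₁, one_mul]
  have uF2 : ∀ X : H →L[ℂ] H, F₀ * (sF * X) = X := fun X => by rw [← mul_assoc, hF₂, one_mul]
  -- the commutator [Q', F₀] is compact where Q' = R* R
  set Q' : H →L[ℂ] H := M * sP * (P * M) with hQ'def
  have ccQ' : IsCompactOperator ⇑(Q' * F₀ - F₀ * Q') := by
    rw [hQ'def]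
    exact aux_cc_mul F₀ _ _ (aux_cc_mul F₀ M sP ccM hPsF) (aux_cc_mul F₀ P M hPF ccM)
  have ccQ's : IsCompactOperator ⇑(Q' * sF - sF * Q') := by
    have e : sF * (Q' * F₀ - F₀ * Q') * sF = sF * Q' * (F₀ * sF) - (sF * F₀) * (Q' * sF) := by
      noncomm_ring
    have h : Q' * sF - sF * Q' = -(sF * (Q' * F₀ - F₀ * Q') * sF) := by
      rw [e, hF₁, hF₂, mul_one, one_mul]
      noncomm_ring
    rw [h, ContinuousLinearMap.coe_neg']
    exact (aux_cc_sandwich sF sF ccQ').neg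
  -- main algebraic identities
  have E1 : (P * M * sF * (M * sP) + (1 - P * M * (M * sP))) *
        (P * M * F₀ * (M * sP) + (1 - P * M * (M * sP))) - 1
      = (P * M * sF) * (Q' * F₀ - F₀ * Q') * (M * sP) := by
    rw [hQ'def]
    simp only [mul_sub, sub_mul, mul_add, add_mul, mul_one, one_mul, mul_assoc,
      mvMP, mvMP', mvMsP, mvMsP', mvsP, mvsP', mvssP, mvssP', idP, hP, idsP, hsP,
      key1, key1', key2, key2', csM, hsM, cMs, hMs, uF1, hF₁, uF2, hF₂]
    abel
  have E2 : (P * M * F₀ * (M * sP) + (1 - P * M * (M * sP))) *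
        (P * M * sF * (M * sP) + (1 - P * M * (M * sP))) - 1
      = (P * M * F₀) * (Q' * sF - sF * Q') * (M * sP) := by
    rw [hQ'def]
    simp only [mul_sub, sub_mul, mul_add, add_mul, mul_one, one_mul, mul_assoc,
      mvMP, mvMP', mvMsP, mvMsP', mvsP, mvsP', mvssP, mvssP', idP, hP, idsP, hsP,
      key1, key1', key2, key2', csM, hsM, cMs, hMs, uF1, hF₁, uF2, hF₂]
    abel
  constructor
  · rw [E1]
    exact aux_cc_sandwich _ _ ccQ'
  · refine aux_fredholm _ ?_ ?_
    · rw [hadjT, E1]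
      exact aux_cc_sandwich _ _ ccQ'
    · rw [hadjT, E2]
      exact aux_cc_sandwich _ _ ccQ's
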